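/- Let S be a nonempty finite set of points in a pseudometric space with distance d (so d is symmetric and satisfies the triangle inequality), and let z = |S|. Let 2P be the cost of an optimal tour of S, i.e. 2P is the minimum, over all cyclic permutations σ of S, of ∑_{v ∈ S} d(v, σ(v)). Suppose l : S → ℝ≥0 satisfies (1) d(u,v) ≥ min(l(u), l(v)) for all distinct u, v ∈ S, and (2) l(v) ≤ P for all v ∈ S. Then (∑_{v ∈ S} l(v)) − max_{v ∈ S} l(v) ≤ ⌈log₂ z⌉ · P. -/

import Mathlib

private lemma iw_path_bound {α : Type*} [PseudoMetricSpace α] (w : ℕ → α) :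
    ∀ a b : ℕ, a ≤ b → dist (w a) (w b) ≤ ∑ i ∈ Finset.Ico a b, dist (w i) (w (i + 1)) := by
  intro a b hab
  induction b, hab using Nat.le_induction with
  | base => simp
  | succ b hab ih =>
    rw [Finset.sum_Ico_succ_top (by omega)]
    calc dist (w a) (w (b + 1)) ≤ dist (w a) (w b) + dist (w b) (w (b + 1)) :=
          dist_triangle _ _ _
      _ ≤ _ := by linarith

private lemma iw_telescope (d : ℕ → ℝ) (t : ℕ → ℕ) :
    ∀ m : ℕ, (∀ j, j < m → t j ≤ t (j + 1)) →
      ∑ j ∈ Finset.range m, ∑ i ∈ Finset.Ico (t j) (t (j + 1)), d i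
        = ∑ i ∈ Finset.Ico (t 0) (t m), d i := by
  intro m
  induction m with
  | zero => simp
  | succ m ih =>
    intro h
    have h0m : t 0 ≤ t m := by
      clear ih
      induction m with
      | zero => exact le_refl _
      | succ m ihm =>
        exact le_trans (ihm (fun j hj => h j (by omega))) (h m (by omega))
    rw [Finset.sum_range_succ, ih (fun j hj => h j (by omega)),
      Finset.sum_Ico_consecutive d h0m (h m (by omega))]

private lemma iw_even_odd (f : ℕ → ℝ) :
    ∀ r : ℕ, ∑ j ∈ Finset.range (2 * r), f j
      = (∑ j ∈ Finset.range r, f (2 * j)) + ∑ j ∈ Finset.range r, f (2 * j + 1) := by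
  intro r
  induction r with
  | zero => simp
  | succ r ih =>
    have h2 : 2 * (r + 1) = 2 * r + 1 + 1 := by ring
    rw [h2, Finset.sum_range_succ, Finset.sum_range_succ, ih,
      Finset.sum_range_succ, Finset.sum_range_succ]
    ring

/-- A permutation is cyclic (a single cycle through all elements) iff its
iterates act transitively. -/
def IsCyclicPerm {β : Type*} (σ : Equiv.Perm β) : Prop :=
  ∀ x y : β, ∃ n : ℕ, (σ ^ n) x = y

/-- **Imase–Waxman lemma.**  Let `S` be a nonempty finite set of points in a
pseudometric space, `z = |S|`, and let `2P` be the minimum cost of a tour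
(cyclic permutation) of `S`.  If `l : S → ℝ≥0` satisfies
`d(u,v) ≥ min (l u) (l v)` for all distinct `u v ∈ S` and `l v ≤ P` for all
`v ∈ S`, then `(∑_{v ∈ S} l v) - max_{v ∈ S} l v ≤ ⌈log₂ z⌉ * P`. -/
theorem imase_waxman_lemma {α : Type*} [PseudoMetricSpace α]
    (S : Finset α) (hS : S.Nonempty) (P : ℝ)
    (hP : IsLeast {c : ℝ | ∃ σ : Equiv.Perm {x // x ∈ S}, IsCyclicPerm σ ∧
            c = ∑ v : {x // x ∈ S}, dist (v : α) (σ v : α)} (2 * P))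
    (l : α → ℝ) (hl0 : ∀ v ∈ S, 0 ≤ l v)
    (h1 : ∀ u ∈ S, ∀ v ∈ S, u ≠ v → min (l u) (l v) ≤ dist u v)
    (h2 : ∀ v ∈ S, l v ≤ P) :
    (∑ v ∈ S, l v) - S.sup' hS l ≤ (⌈Real.logb 2 (S.card : ℝ)⌉ : ℝ) * P := by
  classical
  obtain ⟨hmem, -⟩ := hP
  obtain ⟨σ, hσcyc, hσcost⟩ := hmem
  obtain ⟨a₀, ha₀⟩ := hS
  set z := S.card with hzdef
  let x0 : {x // x ∈ S} := ⟨a₀, ha₀⟩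
  set w : ℕ → {x // x ∈ S} := fun n => (σ ^ n) x0 with hwdef
  -- a power fixing x0 is the identity
  have hpow1 : ∀ n : ℕ, w n = x0 → σ ^ n = 1 := by
    intro n h
    ext y
    obtain ⟨m, hm⟩ := hσcyc x0 y
    have hcomm : σ ^ n * σ ^ m = σ ^ m * σ ^ n := by
      rw [← pow_add, ← pow_add, Nat.add_comm]
    have : (σ ^ n) y = y := by
      calc (σ ^ n) y = (σ ^ n) ((σ ^ m) x0) := by rw [hm]
        _ = (σ ^ n * σ ^ m) x0 := rfl
        _ = (σ ^ m * σ ^ n) x0 := by rw [hcomm]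
        _ = (σ ^ m) (w n) := rfl
        _ = y := by rw [h]; exact hm
    simpa using congrArg Subtype.val this
  set m := orderOf σ with hmdef
  have hm0 : 0 < m := orderOf_pos σ
  have hwinjm : ∀ a b : ℕ, a < m → b < m → w a = w b → a = b := by
    intro a b ha hb hab
    by_contra hne
    wlog h : a < b generalizing a b
    · exact this b a hb ha hab.symm (Ne.symm hne) (by omega)
    have h1' : (σ ^ a) ((σ ^ (b - a)) x0) = (σ ^ a) x0 := by
      rw [← Equiv.Perm.mul_apply, ← pow_add]
      have hba : a + (b - a) = b := by omega
      rw [hba]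
      exact hab.symm
    have h2' : (σ ^ (b - a)) x0 = x0 := (Equiv.injective _) h1'
    have hdvd := orderOf_dvd_of_pow_eq_one (hpow1 (b - a) h2')
    rw [← hmdef] at hdvd
    have := Nat.le_of_dvd (by omega) hdvd
    omega
  have hwsurjm : ∀ y : {x // x ∈ S}, ∃ n, n < m ∧ w n = y := by
    intro y
    obtain ⟨n, hn⟩ := hσcyc x0 y
    refine ⟨n % m, Nat.mod_lt _ hm0, ?_⟩
    show (σ ^ (n % m)) x0 = y
    rw [hmdef, pow_mod_orderOf]
    exact hn
  have hmz : m = z := by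
    have hbij : Function.Bijective (fun i : Fin m => w i) := by
      constructor
      · intro a b hab
        exact Fin.ext (hwinjm a b a.isLt b.isLt hab)
      · intro y
        obtain ⟨n, hn, hw⟩ := hwsurjm y
        exact ⟨⟨n, hn⟩, hw⟩
    have hc := Fintype.card_of_bijective hbij
    rw [Fintype.card_fin, Fintype.card_coe] at hc
    omega
  have hwinj : ∀ a b : ℕ, a < z → b < z → w a = w b → a = b := by
    intro a b ha hb hab
    exact hwinjm a b (by omega) (by omega) hab
  have hwsurj : ∀ y : {x // x ∈ S}, ∃ n, n < z ∧ w n = y := by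
    intro y
    obtain ⟨n, hn, hw⟩ := hwsurjm y
    exact ⟨n, by omega, hw⟩
  have hwz0 : w z = w 0 := by
    show (σ ^ z) x0 = (σ ^ 0) x0
    rw [← hmz, hmdef, pow_orderOf_eq_one, pow_zero]
  have hsucc : ∀ n, w (n + 1) = σ (w n) := by
    intro n
    show (σ ^ (n + 1)) x0 = σ ((σ ^ n) x0)
    rw [pow_succ']
    rfl
  set d : ℕ → ℝ := fun i => dist ((w i : α)) ((w (i + 1) : α)) with hddef
  have hd0 : ∀ i, 0 ≤ d i := fun i => dist_nonneg
  have hzpos : 0 < z := Finset.card_pos.mpr ⟨a₀, ha₀⟩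
  have hbijz : Function.Bijective (fun i : Fin z => w i) := by
    constructor
    · intro a b hab
      exact Fin.ext (hwinj a b a.isLt b.isLt hab)
    · intro y
      obtain ⟨n, hn, hw⟩ := hwsurj y
      exact ⟨⟨n, hn⟩, hw⟩
  have hcost : ∑ i ∈ Finset.range z, d i = 2 * P := by
    rw [hσcost, ← Fin.sum_univ_eq_sum_range (fun i => d i) z]
    exact Fintype.sum_bijective _ hbijz _ _ (fun i => by
      simp only [hddef, hsucc])
  have hP0 : 0 ≤ P := by
    have hnn : 0 ≤ ∑ i ∈ Finset.range z, d i :=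
      Finset.sum_nonneg (fun i _ => hd0 i)
    linarith [hcost]
  -- Key matching lemma
  have keyM : ∀ T : Finset α, T ⊆ S → 2 ≤ T.card →
      ∃ B : Finset α, B ⊆ T ∧ B.card = T.card / 2 ∧ ∑ x ∈ B, l x ≤ P := by
    intro T hTS hk2
    set k := T.card with hkdef
    set pos : Finset ℕ := (Finset.range z).filter (fun n => (w n : α) ∈ T) with hposdef
    have hposcard : pos.card = k := by
      rw [hkdef]
      apply Finset.card_bij (fun n _ => ((w n : α)))
      · intro a ha
        exact (Finset.mem_filter.mp ha).2
      · intro a ha b hb hab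
        have ha' := Finset.mem_range.mp (Finset.mem_filter.mp ha).1
        have hb' := Finset.mem_range.mp (Finset.mem_filter.mp hb).1
        exact hwinj a b ha' hb' (Subtype.ext hab)
      · intro y hy
        obtain ⟨n, hn, hwn⟩ := hwsurj ⟨y, hTS hy⟩
        refine ⟨n, Finset.mem_filter.mpr ⟨Finset.mem_range.mpr hn, ?_⟩, ?_⟩ <;>
          rw [hwn]
        exact hy
    set ts : List ℕ := pos.sort (· ≤ ·) with htsdef
    have hlen : ts.length = k := by rw [htsdef, Finset.length_sort, hposcard]
    set t : ℕ → ℕ := fun j => ts.getD j 0 with htdef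
    have ht_mem : ∀ j, j < k → t j ∈ pos := by
      intro j hj
      have hj' : j < ts.length := by omega
      have h1t : t j = ts[j] := List.getD_eq_getElem ts 0 hj'
      rw [h1t]
      have hmem : ts[j] ∈ ts := List.getElem_mem hj'
      exact (Finset.mem_sort (α := ℕ) (· ≤ ·)).mp hmem
    have ht_mono : ∀ i j, i < j → j < k → t i < t j := by
      intro i j hij hj
      have hi' : i < ts.length := by omega
      have hj' : j < ts.length := by omega
      have hs : ts.Pairwise (· < ·) := by rw [htsdef]; exact (Finset.sortedLT_sort pos).pairwise
      have hrel := hs.rel_get_of_lt (a := ⟨i, hi'⟩) (b := ⟨j, hj'⟩) (Fin.mk_lt_mk.mpr hij)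
      have e_i : t i = ts[i] := List.getD_eq_getElem ts 0 hi'
      have e_j : t j = ts[j] := List.getD_eq_getElem ts 0 hj'
      rw [e_i, e_j]
      simpa [List.get_eq_getElem] using hrel
    have ht_lt : ∀ j, j < k → t j < z := fun j hj =>
      Finset.mem_range.mp (Finset.mem_filter.mp (ht_mem j hj)).1
    have ht_T : ∀ j, j < k → (w (t j) : α) ∈ T := fun j hj =>
      (Finset.mem_filter.mp (ht_mem j hj)).2
    set u : ℕ → {x // x ∈ S} := fun j => w (t (j % k)) with hudef
    have hk0 : 0 < k := by omega
    have hu_T : ∀ j, (u j : α) ∈ T := fun j => ht_T _ (Nat.mod_lt _ hk0)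
    have hu_S : ∀ j, (u j : α) ∈ S := fun j => hTS (hu_T j)
    have hu_eqmod : ∀ j₁ j₂ : ℕ, (u j₁ : α) = (u j₂ : α) → j₁ % k = j₂ % k := by
      intro j₁ j₂ h
      have h1t : t (j₁ % k) = t (j₂ % k) :=
        hwinj _ _ (ht_lt _ (Nat.mod_lt _ hk0)) (ht_lt _ (Nat.mod_lt _ hk0)) (Subtype.ext h)
      by_contra hne
      rcases Nat.lt_or_ge (j₁ % k) (j₂ % k) with h' | h'
      · exact absurd h1t (Nat.ne_of_lt (ht_mono _ _ h' (Nat.mod_lt _ hk0)))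
      · have h'' : j₂ % k < j₁ % k := by omega
        exact absurd h1t.symm (Nat.ne_of_lt (ht_mono _ _ h'' (Nat.mod_lt _ hk0)))
    have hu_ne : ∀ j, (u j : α) ≠ (u (j + 1) : α) := by
      intro j h
      have hmm := hu_eqmod _ _ h
      have ha : j % k < k := Nat.mod_lt _ hk0
      have h1m : (j + 1) % k = (j % k + 1) % k := by
        conv_lhs => rw [Nat.add_mod]
        rw [Nat.mod_eq_of_lt (show 1 < k by omega)]
      rcases Nat.lt_or_ge (j % k + 1) k with h2m | h2m
      · rw [Nat.mod_eq_of_lt h2m] at h1m; omega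
      · have hk' : j % k + 1 = k := by omega
        rw [hk', Nat.mod_self] at h1m
        omega
    set ec : ℕ → ℝ := fun j => dist ((u j : α)) ((u (j + 1) : α)) with hecdef
    have hec0 : ∀ j, 0 ≤ ec j := fun j => dist_nonneg
    have hecmin : ∀ j, min (l (u j : α)) (l (u (j + 1) : α)) ≤ ec j :=
      fun j => h1 _ (hu_S j) _ (hu_S (j + 1)) (hu_ne j)
    have hmod_lt : ∀ j, j < k → j % k = j := fun j hj => Nat.mod_eq_of_lt hj
    -- cycle cost bound
    have hcyc : ∑ j ∈ Finset.range k, ec j ≤ 2 * P := by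
      have hedge : ∀ j, j + 1 < k → ec j ≤ ∑ i ∈ Finset.Ico (t j) (t (j + 1)), d i := by
        intro j hj
        have heq : ec j = dist ((w (t j) : α)) ((w (t (j + 1)) : α)) := by
          simp only [hecdef, hudef, hmod_lt j (by omega), hmod_lt (j + 1) hj]
        rw [heq]
        exact iw_path_bound (fun i => (w i : α)) _ _
          (le_of_lt (ht_mono j (j + 1) (by omega) hj))
      have hlast : ec (k - 1) ≤ (∑ i ∈ Finset.Ico (t (k - 1)) z, d i)
          + ∑ i ∈ Finset.Ico 0 (t 0), d i := by
        have h01 : ec (k - 1) = dist ((w (t (k - 1)) : α)) ((w (t 0) : α)) := by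
          have hm1 : (k - 1 + 1) % k = 0 := by
            have : k - 1 + 1 = k := by omega
            rw [this, Nat.mod_self]
          simp only [hecdef, hudef, hmod_lt (k - 1) (by omega), hm1]
        rw [h01]
        calc dist ((w (t (k - 1)) : α)) ((w (t 0) : α))
            ≤ dist ((w (t (k - 1)) : α)) ((w z : α)) + dist ((w z : α)) ((w (t 0) : α)) :=
              dist_triangle _ _ _
          _ ≤ _ := by
              have hA : dist ((w (t (k - 1)) : α)) ((w z : α))
                  ≤ ∑ i ∈ Finset.Ico (t (k - 1)) z, d i :=
                iw_path_bound (fun i => (w i : α)) _ _ (le_of_lt (ht_lt (k - 1) (by omega)))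
              have hB : dist ((w z : α)) ((w (t 0) : α))
                  ≤ ∑ i ∈ Finset.Ico 0 (t 0), d i := by
                rw [hwz0]
                exact iw_path_bound (fun i => (w i : α)) _ _ (Nat.zero_le _)
              exact add_le_add hA hB
      have hsum : ∑ j ∈ Finset.range k, ec j
          = (∑ j ∈ Finset.range (k - 1), ec j) + ec (k - 1) := by
        conv_lhs => rw [show k = (k - 1) + 1 by omega]
        rw [Finset.sum_range_succ]
      have htel : ∑ j ∈ Finset.range (k - 1), ∑ i ∈ Finset.Ico (t j) (t (j + 1)), d i
          = ∑ i ∈ Finset.Ico (t 0) (t (k - 1)), d i :=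
        iw_telescope d t (k - 1) (fun j hj => le_of_lt (ht_mono j (j + 1) (by omega) (by omega)))
      have h2' : ∑ j ∈ Finset.range (k - 1), ec j
          ≤ ∑ i ∈ Finset.Ico (t 0) (t (k - 1)), d i := by
        rw [← htel]
        refine Finset.sum_le_sum (fun j hj => ?_)
        have := Finset.mem_range.mp hj
        exact hedge j (by omega)
      have hfull : (∑ i ∈ Finset.Ico 0 (t 0), d i) + (∑ i ∈ Finset.Ico (t 0) (t (k - 1)), d i)
          + (∑ i ∈ Finset.Ico (t (k - 1)) z, d i) = 2 * P := by
        rw [Finset.sum_Ico_consecutive d (Nat.zero_le _)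
          (le_of_lt (ht_mono 0 (k - 1) (by omega) (by omega)))]
        rw [Finset.sum_Ico_consecutive d (Nat.zero_le _) (le_of_lt (ht_lt (k - 1) (by omega)))]
        rw [← Finset.range_eq_Ico]
        exact hcost
      linarith [hsum, h2', hlast, hfull]
    set r := k / 2 with hrdef
    have hr1 : 1 ≤ r := by omega
    have h2r : 2 * r ≤ k := by omega
    have hsplit := iw_even_odd ec r
    have hle2r : ∑ j ∈ Finset.range (2 * r), ec j ≤ ∑ j ∈ Finset.range k, ec j :=
      Finset.sum_le_sum_of_subset_of_nonneg (Finset.range_subset_range.mpr h2r)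
        (fun i _ _ => hec0 i)
    have hEO : (∑ j ∈ Finset.range r, ec (2 * j)) + (∑ j ∈ Finset.range r, ec (2 * j + 1))
        ≤ 2 * P := by
      rw [← hsplit]; linarith
    rcases le_or_gt (∑ j ∈ Finset.range r, ec (2 * j)) P with hcase | hcase
    · -- even matching
      set c : ℕ → ℕ := fun j =>
        if l (u (2 * j) : α) ≤ l (u (2 * j + 1) : α) then 2 * j else 2 * j + 1 with hcdef
      have hcbound : ∀ j, 2 * j ≤ c j ∧ c j ≤ 2 * j + 1 := by
        intro j
        simp only [hcdef]
        split <;> omega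
      have hcle : ∀ j, j < r → l (u (c j) : α) ≤ ec (2 * j) := by
        intro j hj
        have hmin := hecmin (2 * j)
        simp only [hcdef]
        split
        · rename_i h
          rwa [min_eq_left h] at hmin
        · rename_i h
          rwa [min_eq_right (le_of_not_ge h)] at hmin
      have hcinj : ∀ j₁ ∈ Finset.range r, ∀ j₂ ∈ Finset.range r,
          (u (c j₁) : α) = (u (c j₂) : α) → j₁ = j₂ := by
        intro j₁ hj₁ j₂ hj₂ h
        have hj₁' := Finset.mem_range.mp hj₁
        have hj₂' := Finset.mem_range.mp hj₂
        have hmm := hu_eqmod _ _ h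
        have hb₁ := hcbound j₁
        have hb₂ := hcbound j₂
        have hck₁ : c j₁ < k := by omega
        have hck₂ : c j₂ < k := by omega
        rw [Nat.mod_eq_of_lt hck₁, Nat.mod_eq_of_lt hck₂] at hmm
        omega
      refine ⟨(Finset.range r).image (fun j => (u (c j) : α)), ?_, ?_, ?_⟩
      · intro x hx
        obtain ⟨j, hj, rfl⟩ := Finset.mem_image.mp hx
        exact hu_T _
      · rw [Finset.card_image_of_injOn (fun j₁ hj₁ j₂ hj₂ h => hcinj j₁ hj₁ j₂ hj₂ h),
          Finset.card_range]
      · rw [Finset.sum_image hcinj]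
        calc ∑ j ∈ Finset.range r, l (u (c j) : α)
            ≤ ∑ j ∈ Finset.range r, ec (2 * j) :=
              Finset.sum_le_sum (fun j hj => hcle j (Finset.mem_range.mp hj))
          _ ≤ P := hcase
    · -- odd matching
      have hodd : ∑ j ∈ Finset.range r, ec (2 * j + 1) ≤ P := by linarith
      set c : ℕ → ℕ := fun j =>
        if l (u (2 * j + 1) : α) ≤ l (u (2 * j + 2) : α) then 2 * j + 1 else 2 * j + 2 with hcdef
      have hcbound : ∀ j, 2 * j + 1 ≤ c j ∧ c j ≤ 2 * j + 2 := by
        intro j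
        simp only [hcdef]
        split <;> omega
      have hcle : ∀ j, j < r → l (u (c j) : α) ≤ ec (2 * j + 1) := by
        intro j hj
        have hmin := hecmin (2 * j + 1)
        have h22 : 2 * j + 1 + 1 = 2 * j + 2 := by omega
        rw [h22] at hmin
        simp only [hcdef]
        split
        · rename_i h
          rwa [min_eq_left h] at hmin
        · rename_i h
          rwa [min_eq_right (le_of_not_ge h)] at hmin
      have hcinj : ∀ j₁ ∈ Finset.range r, ∀ j₂ ∈ Finset.range r,
          (u (c j₁) : α) = (u (c j₂) : α) → j₁ = j₂ := by
        have key : ∀ j₁ j₂, j₁ < j₂ → j₂ < r → c j₁ % k ≠ c j₂ % k := by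
          intro j₁ j₂ h12 hj₂ heq
          have hb₁ := hcbound j₁
          have hb₂ := hcbound j₂
          have h₁k : c j₁ < k := by omega
          rw [Nat.mod_eq_of_lt h₁k] at heq
          rcases Nat.lt_or_ge (c j₂) k with h₂k | h₂k
          · rw [Nat.mod_eq_of_lt h₂k] at heq
            omega
          · have hck : c j₂ = k := by omega
            rw [hck, Nat.mod_self] at heq
            omega
        intro j₁ hj₁ j₂ hj₂ h
        have hj₁' := Finset.mem_range.mp hj₁
        have hj₂' := Finset.mem_range.mp hj₂
        have hmm := hu_eqmod _ _ h
        rcases lt_trichotomy j₁ j₂ with h' | h' | h'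
        · exact absurd hmm (key j₁ j₂ h' hj₂')
        · exact h'
        · exact absurd hmm.symm (key j₂ j₁ h' hj₁')
      refine ⟨(Finset.range r).image (fun j => (u (c j) : α)), ?_, ?_, ?_⟩
      · intro x hx
        obtain ⟨j, hj, rfl⟩ := Finset.mem_image.mp hx
        exact hu_T _
      · rw [Finset.card_image_of_injOn (fun j₁ hj₁ j₂ hj₂ h => hcinj j₁ hj₁ j₂ hj₂ h),
          Finset.card_range]
      · rw [Finset.sum_image hcinj]
        calc ∑ j ∈ Finset.range r, l (u (c j) : α)
            ≤ ∑ j ∈ Finset.range r, ec (2 * j + 1) :=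
              Finset.sum_le_sum (fun j hj => hcle j (Finset.mem_range.mp hj))
          _ ≤ P := hodd
  -- main claim by strong induction on the cardinality
  have main : ∀ k : ℕ, ∀ T : Finset α, T ⊆ S → T.card = k → ∀ (hT : T.Nonempty),
      (∑ x ∈ T, l x) - T.sup' hT l ≤ (Nat.clog 2 k : ℝ) * P := by
    intro k
    induction k using Nat.strong_induction_on with
    | _ k ih =>
      intro T hTS hTk hT
      rcases le_or_gt T.card 1 with hk1 | hk1
      · have hc1 : T.card = 1 := le_antisymm hk1 (Finset.one_le_card.mpr hT)
        obtain ⟨a, rfl⟩ := Finset.card_eq_one.mp hc1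
        have hk1' : k = 1 := by omega
        subst hk1'
        simp [Nat.clog_one_right]
      · obtain ⟨B, hBT, hBcard, hBsum⟩ := keyM T hTS (by omega)
        have hT'S : T \ B ⊆ S := fun x hx => hTS (Finset.sdiff_subset hx)
        have hT'card : (T \ B).card = k - k / 2 := by
          rw [Finset.card_sdiff_of_subset hBT, hBcard, hTk]
        have hT'ne : (T \ B).Nonempty := Finset.card_pos.mp (by omega)
        have hlt : (T \ B).card < k := by omega
        have hsup : (T \ B).sup' hT'ne l ≤ T.sup' hT l :=
          Finset.sup'_mono l Finset.sdiff_subset hT'ne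
        have hsum : (∑ x ∈ T \ B, l x) + ∑ x ∈ B, l x = ∑ x ∈ T, l x :=
          Finset.sum_sdiff hBT
        have ihT' := ih (T \ B).card hlt (T \ B) hT'S rfl hT'ne
        have hclog : Nat.clog 2 k = Nat.clog 2 ((T \ B).card) + 1 := by
          have harg : (k + 2 - 1) / 2 = k - k / 2 := by omega
          rw [hT'card, Nat.clog_of_two_le (by norm_num) (by omega), harg]
        rw [hclog]
        push_cast
        have hBP : ∑ x ∈ B, l x ≤ P := hBsum
        linarith [ihT', hsup, hsum, hBP]
  have hfinal := main z S (Finset.Subset.refl S) rfl ⟨a₀, ha₀⟩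
  have hlogb : ⌈Real.logb 2 ((z : ℕ) : ℝ)⌉ = (Nat.clog 2 z : ℤ) := by
    have h2c : ((2 : ℕ) : ℝ) = (2 : ℝ) := by norm_cast
    rw [← h2c, Real.ceil_logb_natCast (Nat.cast_nonneg z), Int.clog_natCast]
  rw [hlogb]
  push_cast
  convert hfinal using 3
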